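/- For every t in the base field, the bracket [e₁,e₄]_t=[e₂,e₃]_t=-e₁, [e₂,e₄]_t=(t-1/2)e₂, [e₃,e₄]_t=-(t+1/2)e₃ on a 4-dimensional vector space satisfies the Jacobi identity, so the deformed family Φ'_{1,t} is a family of Lie algebras. -/

import Mathlib

set_option maxHeartbeats 1000000
noncomputable section

/-- The deformed bracket of `Φ′_{1,t}` on `Fin 4 → K`, with basis `e₁,…,e₄`
(indexed `0,…,3`): `[e₁,e₄]=[e₂,e₃]=-e₁`, `[e₂,e₄]=(t-1/2)e₂`,
`[e₃,e₄]=-(t+1/2)e₃`, extended antisymmetrically and bilinearly. -/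
def brPhi1t {K : Type*} [Field K] (t : K) (x y : Fin 4 → K) : Fin 4 → K :=
  ![ -(x 0 * y 3 - x 3 * y 0) - (x 1 * y 2 - x 2 * y 1),
     (t - 1/2) * (x 1 * y 3 - x 3 * y 1),
     -(t + 1/2) * (x 2 * y 3 - x 3 * y 2),
     0 ]

/-- For every `t`, the deformed bracket of `Φ′_{1,t}` satisfies the Jacobi
identity, so `Φ′_{1,t}` is a family of Lie algebras. -/
theorem phi1t_jacobi {K : Type*} [Field K] (h2 : (2 : K) ≠ 0) (t : K) :
    ∀ x y z : Fin 4 → K,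
      brPhi1t t (brPhi1t t x y) z + brPhi1t t (brPhi1t t y z) x
        + brPhi1t t (brPhi1t t z x) y = 0 := by
  intro x y z
  funext i
  fin_cases i <;>
  · simp only [brPhi1t, Fin.isValue, Fin.mk_zero, Fin.mk_one, Matrix.cons_val_zero,
      Matrix.cons_val_one, Matrix.head_cons, Matrix.cons_val_two, Matrix.tail_cons,
      Matrix.cons_val_three, Pi.add_apply, Pi.zero_apply, Matrix.cons_val',
      Matrix.cons_val_fin_one, Matrix.empty_val', show ((2:Fin 4).1 : Fin 4) = 2 from rfl,
      show (⟨2, by decide⟩ : Fin 4) = 2 from rfl, show (⟨3, by decide⟩ : Fin 4) = 3 from rfl]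
    field_simp
    try ring
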